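/- Approximate support recovery (combined): Under the hypotheses ‖y − Y_i c_i*‖₂ ≤ βε where c* = (c_i*, c_{-i}*) is optimal for min ‖c‖₁ s.t. ‖y − Y c‖₂ ≤ γε, with Y_i = X_i + Z_i, columns of X_i unit vectors spanning S_i with inradius r_i, columns of Z_i of norm ≤ ε, y = x + z with x ∈ S_i unit and ‖z‖₂ ≤ ε, ‖z − Z_i c_i*‖₂ ≤ (γ/2)ε, and ε ≤ γ r_i/(2β + γ): then ‖c_{-i}*‖₁ ≤ ((2β + γ)/(2 r_i)) ε. -/

import Mathlib

open scoped BigOperators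

/-- Euclidean (ℓ2) norm of a vector. -/
noncomputable def l2 {n : ℕ} (v : Fin n → ℝ) : ℝ := Real.sqrt (∑ i, (v i) ^ 2)

/-- ℓ1 norm of a vector. -/
noncomputable def l1 {n : ℕ} (v : Fin n → ℝ) : ℝ := ∑ i, |v i|

/-- Matrix-vector product, where the matrix is given by its columns. -/
noncomputable def mv {n N : ℕ} (A : Fin N → Fin n → ℝ) (c : Fin N → ℝ) : Fin n → ℝ :=
  ∑ j, c j • A j

/-- Euclidean inner product. -/
noncomputable def dot {n : ℕ} (v w : Fin n → ℝ) : ℝ := ∑ i, v i * w i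

/-- Symmetrized convex hull of the columns of `X`. -/
def symmHull {n N : ℕ} (X : Fin N → Fin n → ℝ) : Set (Fin n → ℝ) :=
  convexHull ℝ (Set.range X ∪ Set.range (fun j => -X j))

noncomputable def eL {n : ℕ} : (Fin n → ℝ) ≃ₗ[ℝ] EuclideanSpace ℝ (Fin n) :=
  (WithLp.linearEquiv 2 ℝ (Fin n → ℝ)).symm

lemma l2_eq {n : ℕ} (v : Fin n → ℝ) : l2 v = ‖eL v‖ := by
  rw [EuclideanSpace.norm_eq]
  unfold l2
  congr 1
  refine Finset.sum_congr rfl fun i _ => ?_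
  rw [Real.norm_eq_abs, sq_abs]
  rfl

lemma l2_nonneg {n : ℕ} (v : Fin n → ℝ) : 0 ≤ l2 v := by rw [l2_eq]; exact norm_nonneg _

lemma l2_sub_le {n : ℕ} (a b : Fin n → ℝ) : l2 (a - b) ≤ l2 a + l2 b := by
  simp only [l2_eq, map_sub]; exact norm_sub_le _ _

lemma l2_smul {n : ℕ} (c : ℝ) (v : Fin n → ℝ) : l2 (c • v) = |c| * l2 v := by
  simp only [l2_eq, map_smul, norm_smul, Real.norm_eq_abs]

lemma l2_eq_zero {n : ℕ} {v : Fin n → ℝ} (h : l2 v = 0) : v = 0 := by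
  rw [l2_eq, norm_eq_zero] at h
  simpa using congrArg eL.symm h

lemma l1_nonneg {n : ℕ} (v : Fin n → ℝ) : 0 ≤ l1 v :=
  Finset.sum_nonneg fun i _ => abs_nonneg _

lemma l1_smul {n : ℕ} (c : ℝ) (v : Fin n → ℝ) : l1 (c • v) = |c| * l1 v := by
  simp [l1, abs_mul, Finset.mul_sum]

lemma l1_add_le {n : ℕ} (a b : Fin n → ℝ) : l1 (a + b) ≤ l1 a + l1 b := by
  simp only [l1, ← Finset.sum_add_distrib]
  exact Finset.sum_le_sum fun i _ => abs_add_le _ _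

lemma l1_zero {n : ℕ} : l1 (0 : Fin n → ℝ) = 0 := by simp [l1]

lemma mv_add_right {n N : ℕ} (A : Fin N → Fin n → ℝ) (c d : Fin N → ℝ) :
    mv A (c + d) = mv A c + mv A d := by
  simp [mv, add_smul, Finset.sum_add_distrib]

lemma mv_smul {n N : ℕ} (A : Fin N → Fin n → ℝ) (t : ℝ) (c : Fin N → ℝ) :
    mv A (t • c) = t • mv A c := by
  simp [mv, Finset.smul_sum, smul_smul]

lemma mv_zero {n N : ℕ} (A : Fin N → Fin n → ℝ) : mv A 0 = 0 := by simp [mv]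

lemma mv_add_left {n N : ℕ} (A B : Fin N → Fin n → ℝ) (c : Fin N → ℝ)
    (C : Fin N → Fin n → ℝ) (h : ∀ j, C j = A j + B j) :
    mv C c = mv A c + mv B c := by
  simp only [mv]
  rw [← Finset.sum_add_distrib]
  exact Finset.sum_congr rfl fun j _ => by rw [h j, smul_add]

lemma l2_mv_le {n N : ℕ} (A : Fin N → Fin n → ℝ) (c : Fin N → ℝ) (ε : ℝ)
    (hA : ∀ j, l2 (A j) ≤ ε) : l2 (mv A c) ≤ l1 c * ε := by
  have : eL (mv A c) = ∑ j, c j • eL (A j) := by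
    simp [mv, map_sum, map_smul]
  rw [l2_eq, this, l1, Finset.sum_mul]
  refine (norm_sum_le _ _).trans (Finset.sum_le_sum fun j _ => ?_)
  rw [norm_smul, Real.norm_eq_abs]
  exact mul_le_mul_of_nonneg_left (by rw [← l2_eq]; exact hA j) (abs_nonneg _)

lemma hull_rep {n N : ℕ} (X : Fin N → Fin n → ℝ) (v : Fin n → ℝ) (hv : v ∈ symmHull X) :
    ∃ b, l1 b ≤ 1 ∧ mv X b = v := by
  set T : Set (Fin n → ℝ) := {w | ∃ b, l1 b ≤ 1 ∧ mv X b = w} with hT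
  have hconv : Convex ℝ T := by
    rintro _ ⟨b1, hb1, rfl⟩ _ ⟨b2, hb2, rfl⟩ a t ha ht hat
    refine ⟨a • b1 + t • b2, ?_, by rw [mv_add_right, mv_smul, mv_smul]⟩
    calc l1 (a • b1 + t • b2) ≤ l1 (a • b1) + l1 (t • b2) := l1_add_le _ _
      _ = |a| * l1 b1 + |t| * l1 b2 := by rw [l1_smul, l1_smul]
      _ ≤ a * 1 + t * 1 := by
          rw [abs_of_nonneg ha, abs_of_nonneg ht]
          gcongr
      _ = 1 := by linarith
  have hsub : Set.range X ∪ Set.range (fun j => -X j) ⊆ T := by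
    rintro w (⟨j, rfl⟩ | ⟨j, rfl⟩)
    · exact ⟨fun k => if k = j then 1 else 0, by simp [l1, apply_ite abs],
        by simp [mv, ite_smul]⟩
    · exact ⟨fun k => if k = j then -1 else 0, by simp [l1, apply_ite abs],
        by simp [mv, ite_smul]⟩
  exact convexHull_min hsub hconv hv

/-- approximate support recovery (combined). -/
theorem stmt_10 {n Ni M : ℕ} (S : Submodule ℝ (Fin n → ℝ))
    (Xi Zi : Fin Ni → Fin n → ℝ) (Ymi : Fin M → Fin n → ℝ)
    (hXS : ∀ j, Xi j ∈ S) (hXunit : ∀ j, l2 (Xi j) = 1)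
    (hspan : Submodule.span ℝ (Set.range Xi) = S)
    (r ε γ β : ℝ) (hr : 0 < r) (hε : 0 < ε) (hγ : 0 < γ) (hβ : γ / 2 < β)
    (hball : ∀ v ∈ S, l2 v ≤ r → v ∈ symmHull Xi)
    (hZcol : ∀ j, l2 (Zi j) ≤ ε)
    (Yi : Fin Ni → Fin n → ℝ) (hYi : ∀ j, Yi j = Xi j + Zi j)
    (y x z : Fin n → ℝ) (hy : y = x + z) (hxS : x ∈ S) (hxunit : l2 x = 1)
    (hz : l2 z ≤ ε)
    (ci : Fin Ni → ℝ) (cmi : Fin M → ℝ)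
    (hfeas : l2 (y - mv Yi ci - mv Ymi cmi) ≤ γ * ε)
    (hopt : ∀ (di : Fin Ni → ℝ) (dmi : Fin M → ℝ),
      l2 (y - mv Yi di - mv Ymi dmi) ≤ γ * ε → l1 ci + l1 cmi ≤ l1 di + l1 dmi)
    (happrox : l2 (y - mv Yi ci) ≤ β * ε)
    (hznoise : l2 (z - mv Zi ci) ≤ (γ / 2) * ε)
    (hεsmall : ε ≤ γ * r / (2 * β + γ)) :
    l1 cmi ≤ (2 * β + γ) / (2 * r) * ε := by
  set xt : Fin n → ℝ := x - mv Xi ci with hxt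
  have hYsplit : ∀ c : Fin Ni → ℝ, mv Yi c = mv Xi c + mv Zi c :=
    fun c => mv_add_left Xi Zi c Yi hYi
  have h1 : y - mv Yi ci = xt + (z - mv Zi ci) := by
    rw [hy, hYsplit, hxt]; abel
  have hxtS : xt ∈ S := by
    refine Submodule.sub_mem S hxS ?_
    exact Submodule.sum_mem S fun j _ => Submodule.smul_mem S _ (hXS j)
  have hxt_norm : l2 xt ≤ (β + γ / 2) * ε := by
    have : xt = (y - mv Yi ci) - (z - mv Zi ci) := by rw [h1]; abel
    calc l2 xt ≤ l2 (y - mv Yi ci) + l2 (z - mv Zi ci) := this ▸ l2_sub_le _ _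
      _ ≤ β * ε + γ / 2 * ε := add_le_add happrox hznoise
      _ = (β + γ / 2) * ε := by ring
  -- obtain a representation b of xt with small l1 norm
  obtain ⟨b, hb1, hb2⟩ : ∃ b, l1 b ≤ l2 xt / r ∧ mv Xi b = xt := by
    rcases eq_or_lt_of_le (l2_nonneg xt) with h0 | hpos
    · refine ⟨0, by simp [l1_zero, ← h0], ?_⟩
      rw [mv_zero, l2_eq_zero h0.symm]
    · set t : ℝ := r / l2 xt with ht
      have htpos : 0 < t := div_pos hr hpos
      have hvS : t • xt ∈ S := Submodule.smul_mem S t hxtS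
      have hvnorm : l2 (t • xt) ≤ r := by
        rw [l2_smul, abs_of_pos htpos, ht, div_mul_cancel₀ _ (ne_of_gt hpos)]
      obtain ⟨b0, hb0, hb0eq⟩ := hull_rep Xi _ (hball _ hvS hvnorm)
      refine ⟨(l2 xt / r) • b0, ?_, ?_⟩
      · rw [l1_smul, abs_of_pos (div_pos hpos hr)]
        calc (l2 xt / r) * l1 b0 ≤ (l2 xt / r) * 1 :=
          mul_le_mul_of_nonneg_left hb0 (le_of_lt (div_pos hpos hr))
          _ = l2 xt / r := mul_one _
      · rw [mv_smul, hb0eq, smul_smul]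
        rw [div_mul_div_comm, mul_comm (l2 xt) r, div_self (by positivity), one_smul]
  have hbound : l1 b ≤ (β + γ / 2) * ε / r :=
    hb1.trans (by gcongr)
  -- feasibility of (ci + b, 0)
  have hres : y - mv Yi (ci + b) - mv Ymi 0 = (z - mv Zi ci) - mv Zi b := by
    rw [mv_zero, mv_add_right, hYsplit b, hb2, hYsplit ci, hy, hxt]
    abel
  have hZb : l2 (mv Zi b) ≤ l1 b * ε := l2_mv_le Zi b ε hZcol
  have hεsmall' : ε * (2 * β + γ) ≤ γ * r := by
    have h2βγ : 0 < 2 * β + γ := by linarith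
    rw [div_eq_mul_inv] at hεsmall
    calc ε * (2 * β + γ) ≤ (γ * r * (2 * β + γ)⁻¹) * (2 * β + γ) := by gcongr
      _ = γ * r := by field_simp
  have hkey : l1 b * ε ≤ γ / 2 * ε := by
    have h1b : l1 b * r ≤ (β + γ / 2) * ε := by
      calc l1 b * r ≤ ((β + γ / 2) * ε / r) * r := by gcongr
        _ = (β + γ / 2) * ε := by field_simp
    nlinarith [l1_nonneg b, hε.le, hr.le, mul_le_mul_of_nonneg_left hεsmall' (l1_nonneg b)]
  have hfeas' : l2 (y - mv Yi (ci + b) - mv Ymi 0) ≤ γ * ε := by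
    rw [hres]
    calc l2 ((z - mv Zi ci) - mv Zi b) ≤ l2 (z - mv Zi ci) + l2 (mv Zi b) := l2_sub_le _ _
      _ ≤ γ / 2 * ε + γ / 2 * ε := add_le_add hznoise (hZb.trans hkey)
      _ = γ * ε := by ring
  have hopt' := hopt (ci + b) 0 hfeas'
  have : l1 cmi ≤ l1 b := by
    have := (l1_add_le ci b)
    simp only [l1_zero] at hopt'
    linarith
  refine this.trans (hbound.trans ?_)
  rw [div_le_iff₀ hr] at *
  have : (2 * β + γ) / (2 * r) * ε * r = (β + γ / 2) * ε := by
    field_simp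
  linarith [this]
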